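/- Let G be a finite group. If the intersection graph of cyclic subgroups I_c(G) contains no triangle, then I_c(G) is acyclic (a forest). -/

import Mathlib

/-- The vertex type of the intersection graph of cyclic subgroups:
proper nontrivial cyclic subgroups of `G`. -/
def CyclicVertex (G : Type*) [Group G] : Type _ :=
  {H : Subgroup G // H ≠ ⊥ ∧ H ≠ ⊤ ∧ IsCyclic H}

/-- The intersection graph of cyclic subgroups of a group `G`: vertices are the
proper nontrivial cyclic subgroups, two distinct vertices adjacent iff their
intersection is nontrivial. -/
def cyclicIntersectionGraph (G : Type*) [Group G] : SimpleGraph (CyclicVertex G) where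
  Adj A B := A ≠ B ∧ A.1 ⊓ B.1 ≠ ⊥
  symm := by
    constructor
    rintro A B ⟨h1, h2⟩
    exact ⟨h1.symm, by rwa [inf_comm]⟩
  loopless := by
    constructor
    rintro A ⟨h, -⟩
    exact h rfl

lemma isCyclic_zpowers_aux {G : Type*} [Group G] (x : G) :
    IsCyclic (Subgroup.zpowers x) := by
  refine ⟨⟨⟨x, Subgroup.mem_zpowers x⟩, ?_⟩⟩
  rintro ⟨y, hy⟩
  obtain ⟨n, hn⟩ := Subgroup.mem_zpowers_iff.mp hy
  refine Subgroup.mem_zpowers_iff.mpr ⟨n, ?_⟩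
  ext
  simpa using hn

/-- Triangle-freeness forces adjacent vertices to be comparable. -/
lemma comparable_of_adj {G : Type*} [Group G]
    (h : (cyclicIntersectionGraph G).CliqueFree 3) {A B : CyclicVertex G}
    (hadj : (cyclicIntersectionGraph G).Adj A B) : A.1 ≤ B.1 ∨ B.1 ≤ A.1 := by
  classical
  obtain ⟨hne, hbot⟩ := hadj
  obtain ⟨⟨x, hx⟩, hx1⟩ := Subgroup.ne_bot_iff_exists_ne_one.mp hbot
  have hx1' : x ≠ 1 := by
    intro hxx
    exact hx1 (by ext; simpa using hxx)
  have hxA : x ∈ A.1 := hx.1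
  have hxB : x ∈ B.1 := hx.2
  have hzA : Subgroup.zpowers x ≤ A.1 := Subgroup.zpowers_le.mpr hxA
  have hzB : Subgroup.zpowers x ≤ B.1 := Subgroup.zpowers_le.mpr hxB
  have hzbot : Subgroup.zpowers x ≠ ⊥ := by
    simpa [Subgroup.zpowers_eq_bot] using hx1'
  have hztop : Subgroup.zpowers x ≠ ⊤ := by
    intro htop
    rw [htop] at hzA
    exact A.2.2.1 (top_le_iff.mp hzA)
  set C : CyclicVertex G := ⟨Subgroup.zpowers x, hzbot, hztop, isCyclic_zpowers_aux x⟩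
    with hC
  by_cases hCA : C = A
  · left
    have : C.1 ≤ B.1 := hzB
    rwa [hCA] at this
  by_cases hCB : C = B
  · right
    have : C.1 ≤ A.1 := hzA
    rwa [hCB] at this
  · exfalso
    refine h {A, B, C} (SimpleGraph.is3Clique_triple_iff.mpr ⟨⟨hne, hbot⟩, ?_, ?_⟩)
    · exact ⟨fun e => hCA e.symm, by show A.1 ⊓ Subgroup.zpowers x ≠ ⊥; rw [inf_eq_right.mpr hzA]; exact hzbot⟩
    · exact ⟨fun e => hCB e.symm, by show B.1 ⊓ Subgroup.zpowers x ≠ ⊥; rw [inf_eq_right.mpr hzB]; exact hzbot⟩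

/-- The middle vertex of a path of length two (with distinct, hence by
triangle-freeness non-adjacent, endpoints) contains both its neighbors. -/
lemma middle_max {G : Type*} [Group G]
    (h : (cyclicIntersectionGraph G).CliqueFree 3) {A B C : CyclicVertex G}
    (hAB : (cyclicIntersectionGraph G).Adj A B)
    (hBC : (cyclicIntersectionGraph G).Adj B C) (hAC : A ≠ C) :
    A.1 ≤ B.1 ∧ C.1 ≤ B.1 := by
  classical
  have hnadj : ¬ (cyclicIntersectionGraph G).Adj A C := fun hadj =>
    h {A, B, C} (SimpleGraph.is3Clique_triple_iff.mpr ⟨hAB, hadj, hBC⟩)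
  have hACbot : A.1 ⊓ C.1 = ⊥ := by
    by_contra hb
    exact hnadj ⟨hAC, hb⟩
  rcases comparable_of_adj h hAB with h1 | h1
  · rcases comparable_of_adj h hBC with h2 | h2
    · exfalso
      have : A.1 ≤ A.1 ⊓ C.1 := le_inf le_rfl (h1.trans h2)
      rw [hACbot] at this
      exact A.2.1 (le_bot_iff.mp this)
    · exact ⟨h1, h2⟩
  · rcases comparable_of_adj h hBC with h2 | h2
    · exfalso
      have : B.1 ≤ A.1 ⊓ C.1 := le_inf h1 h2
      rw [hACbot] at this
      exact B.2.1 (le_bot_iff.mp this)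
    · exfalso
      have : C.1 ≤ A.1 ⊓ C.1 := le_inf (h2.trans h1) le_rfl
      rw [hACbot] at this
      exact C.2.1 (le_bot_iff.mp this)

theorem stmt13 (G : Type*) [Group G] [Finite G]
    (h : (cyclicIntersectionGraph G).CliqueFree 3) :
    (cyclicIntersectionGraph G).IsAcyclic := by
  intro v p hp
  match p with
  | .nil => simpa using hp.three_le_length
  | .cons h₁ (.nil) => simpa using hp.three_le_length
  | .cons h₁ (.cons h₂ (.nil)) => simpa using hp.three_le_length
  | @SimpleGraph.Walk.cons _ _ _ b _ h₁
      (@SimpleGraph.Walk.cons _ _ _ c _ h₂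
        (@SimpleGraph.Walk.cons _ _ _ d _ h₃ q)) =>
      -- vertices v - b - c - d, q : Walk d v
      have hnodup := hp.2
      simp only [SimpleGraph.Walk.support_cons, List.tail_cons, List.nodup_cons] at hnodup
      obtain ⟨hb, hc, _⟩ := hnodup
      have hbc : b ≠ c := fun e => hb (e ▸ List.mem_cons_self)
      have hbq : b ∉ q.support := fun m => hb (List.mem_cons_of_mem _ m)
      have hcq : c ∉ q.support := hc
      have hvc : v ≠ c := fun e => hcq (e ▸ q.end_mem_support)
      have hbd : b ≠ d := fun e => hbq (e ▸ q.start_mem_support)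
      have t1 := middle_max h h₁ h₂ hvc
      have t2 := middle_max h h₂ h₃ hbd
      exact hbc (Subtype.ext (le_antisymm t2.1 t1.2))
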